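/- Let ε ∈ (0,1), η = 2ε/(1−ε), and let d, w, χ be differentiable functions of Y on an interval not containing 0, with d > 0, χ > 0 and 𝒞 := (d·Y^(−2))^(−η)·Y² − χ²[(w+ε)² − ε(w−1)² + 4εwd] ≠ 0. Assume d' = (2χ²/Y)·d(w+ε)²(d−w)/𝒞, w' = −(w+ε)(1−3w)/((1−ε)Y) − (2(1+ε)χ²/((1−ε)Y))·w(w+ε)²(d−w)/𝒞, and χ' = (1−w)χ/((1−ε)Y). Then (d^(1+η)·w)' = −d^(1+η)·(w+ε)(1−3w)/((1−ε)Y) and (χ²·d^(1+η)·w)' = χ²·d^(1+η)·(w² + (1+3ε)w − ε)/((1−ε)Y). -/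

import Mathlib

theorem stmt_8 (ε η : ℝ) (hε : 0 < ε) (hε1 : ε < 1) (hη : η = 2*ε/(1-ε))
    (I : Set ℝ) (hI0 : (0:ℝ) ∉ I)
    (d w χ Cc : ℝ → ℝ)
    (hd : ∀ Y ∈ I, 0 < d Y) (hχ : ∀ Y ∈ I, 0 < χ Y)
    (hCc : ∀ Y ∈ I, Cc Y = (d Y / Y^2) ^ (-η) * Y^2
      - (χ Y)^2 * ((w Y + ε)^2 - ε*(w Y - 1)^2 + 4*ε*(w Y)*(d Y)))
    (hCne : ∀ Y ∈ I, Cc Y ≠ 0)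
    (hd' : ∀ Y ∈ I,
      HasDerivAt d (2*(χ Y)^2/Y * (d Y)*(w Y + ε)^2*(d Y - w Y)/(Cc Y)) Y)
    (hw' : ∀ Y ∈ I,
      HasDerivAt w (-(w Y + ε)*(1 - 3*w Y)/((1-ε)*Y)
        - 2*(1+ε)*(χ Y)^2/((1-ε)*Y) * (w Y)*(w Y + ε)^2*(d Y - w Y)/(Cc Y)) Y)
    (hχ' : ∀ Y ∈ I, HasDerivAt χ ((1 - w Y)*(χ Y)/((1-ε)*Y)) Y) :
    ∀ Y ∈ I,
      HasDerivAt (fun z => d z ^ (1+η) * w z)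
        (-(d Y ^ (1+η)) * (w Y + ε)*(1 - 3*w Y)/((1-ε)*Y)) Y ∧
      HasDerivAt (fun z => (χ z)^2 * d z ^ (1+η) * w z)
        ((χ Y)^2 * d Y ^ (1+η) * ((w Y)^2 + (1+3*ε)*(w Y) - ε)/((1-ε)*Y)) Y := by
  intro Y hY
  have hY0 : Y ≠ 0 := fun h => hI0 (h ▸ hY)
  have hdY := hd Y hY
  have hCY := hCne Y hY
  have h1ε : (1:ℝ) - ε ≠ 0 := by linarith
  have key : d Y ^ (1+η) = d Y ^ η * d Y := by
    rw [Real.rpow_add hdY, Real.rpow_one, mul_comm]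
  have hdp : HasDerivAt (fun z => d z ^ (1+η))
      ((2*(χ Y)^2/Y * (d Y)*(w Y + ε)^2*(d Y - w Y)/(Cc Y)) * (1+η) * d Y ^ η) Y := by
    have := (hd' Y hY).rpow_const (p := 1+η) (Or.inl hdY.ne')
    simpa [show (1:ℝ)+η-1 = η by ring] using this
  have hf : HasDerivAt (fun z => d z ^ (1+η) * w z)
      (-(d Y ^ (1+η)) * (w Y + ε)*(1 - 3*w Y)/((1-ε)*Y)) Y := by
    have h : HasDerivAt (fun z => d z ^ (1+η) * w z) _ Y := hdp.fun_mul (hw' Y hY)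
    convert h using 1
    rw [key]
    subst hη
    field_simp
    ring
  refine ⟨hf, ?_⟩
  have hχsq : HasDerivAt (fun z => (χ z)^2)
      (2 * χ Y * ((1 - w Y)*(χ Y)/((1-ε)*Y))) Y := by
    simpa [mul_comm] using (hχ' Y hY).fun_pow 2
  have hg : HasDerivAt (fun z => (χ z)^2 * (d z ^ (1+η) * w z)) _ Y := hχsq.fun_mul hf
  have : (fun z => (χ z)^2 * d z ^ (1+η) * w z)
      = fun z => (χ z)^2 * (d z ^ (1+η) * w z) := by
    funext z; ring
  rw [this]
  convert hg using 1
  field_simp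
  ring
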